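/- Let N ≥ 2, 2 ≤ k ≤ N and 1 ≤ m ≤ N be integers. Then Σ_{T ⊆ {1,…,N}, |T| = m} ∏_{l=1}^{k−1} (−1)^{χ_T(l)+χ_T(l+1)} = C(N,m) − 4·Σ_{i=1}^{k−1} C(k−2, i−1)·C(N−k, m−i) as integers, where χ_T is the 0/1 indicator function of T, C(a,b) denotes the binomial coefficient, and terms C(N−k, m−i) with i > m are taken to be 0. -/

import Mathlib

/-- The 0/1 indicator function `χ_T` of a finite set `T ⊆ ℕ`. -/
def chi (T : Finset ℕ) (x : ℕ) : ℕ :=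
  if x ∈ T then 1 else 0

lemma sum_pcard_insert (f : Finset ℕ → ℤ) (a : ℕ) (s : Finset ℕ) (ha : a ∉ s) (m : ℕ) :
    ∑ T ∈ Finset.powersetCard (m+1) (insert a s), f T
      = (∑ T ∈ Finset.powersetCard (m+1) s, f T)
        + ∑ T ∈ Finset.powersetCard m s, f (insert a T) := by
  rw [Finset.powersetCard_succ_insert ha, Finset.sum_union, Finset.sum_image]
  · intro x hx y hy hxy
    rw [Finset.mem_coe, Finset.mem_powersetCard] at hx hy
    have hax : a ∉ x := fun h => ha (hx.1 h)
    have hay : a ∉ y := fun h => ha (hy.1 h)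
    rw [← Finset.erase_insert hax, ← Finset.erase_insert hay, hxy]
  · rw [Finset.disjoint_left]
    intro T hT hT'
    rw [Finset.mem_powersetCard] at hT
    obtain ⟨u, hu, rfl⟩ := Finset.mem_image.1 hT'
    exact ha (hT.1 (Finset.mem_insert_self a u))

lemma key (a b : ℕ) (s : Finset ℕ) (hab : a ≠ b) (ha : a ∉ s) (hb : b ∉ s)
    (m : ℕ) (hm : 1 ≤ m) :
    ∑ T ∈ Finset.powersetCard m (insert a (insert b s)), (-1:ℤ)^(chi T a + chi T b)
      = ((s.card + 2).choose m : ℤ) - 4 * ((s.card).choose (m-1) : ℤ) := by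
  obtain ⟨m', rfl⟩ : ∃ m', m = m' + 1 := ⟨m - 1, by omega⟩
  have ha' : a ∉ insert b s := by simp [hab, ha]
  rw [sum_pcard_insert _ a (insert b s) ha' m']
  have h1 : ∑ T ∈ Finset.powersetCard (m'+1) (insert b s), (-1:ℤ)^(chi T a + chi T b)
      = (s.card.choose (m'+1) : ℤ) - (s.card.choose m' : ℤ) := by
    rw [sum_pcard_insert _ b s hb m']
    have e1 : ∑ T ∈ Finset.powersetCard (m'+1) s, (-1:ℤ)^(chi T a + chi T b)
        = (s.card.choose (m'+1) : ℤ) := by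
      rw [Finset.sum_congr rfl (fun T hT => ?_), Finset.sum_const,
        Finset.card_powersetCard, nsmul_eq_mul, mul_one]
      rw [Finset.mem_powersetCard] at hT
      have : a ∉ T := fun h => ha (hT.1 h)
      have : b ∉ T := fun h => hb (hT.1 h)
      simp [chi, *]
    have e2 : ∑ T ∈ Finset.powersetCard m' s, (-1:ℤ)^(chi (insert b T) a + chi (insert b T) b)
        = -(s.card.choose m' : ℤ) := by
      rw [Finset.sum_congr rfl (fun T hT => ?_), Finset.sum_const,
        Finset.card_powersetCard, nsmul_eq_mul, mul_neg_one]
      rw [Finset.mem_powersetCard] at hT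
      have h2 : a ∉ insert b T := by
        simp only [Finset.mem_insert]
        rintro (h | h)
        · exact hab h
        · exact ha (hT.1 h)
      simp [chi, h2]
    rw [e1, e2]; ring
  rw [h1]
  rcases Nat.eq_zero_or_pos m' with rfl | hm'
  · rw [Finset.powersetCard_zero, Finset.sum_singleton]
    have : chi (insert a ∅) a = 1 := by simp [chi]
    have h2 : chi (insert a (∅:Finset ℕ)) b = 0 := by simp [chi, Ne.symm hab]
    rw [this, h2]
    simp [Nat.choose_one_right]
    ring
  · obtain ⟨m'', rfl⟩ : ∃ m'', m' = m'' + 1 := ⟨m' - 1, by omega⟩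
    rw [sum_pcard_insert _ b s hb m'']
    have e3 : ∑ T ∈ Finset.powersetCard (m''+1) s,
        (-1:ℤ)^(chi (insert a T) a + chi (insert a T) b) = -(s.card.choose (m''+1) : ℤ) := by
      rw [Finset.sum_congr rfl (fun T hT => ?_), Finset.sum_const,
        Finset.card_powersetCard, nsmul_eq_mul, mul_neg_one]
      rw [Finset.mem_powersetCard] at hT
      have h2 : b ∉ insert a T := by
        simp only [Finset.mem_insert]
        rintro (h | h)
        · exact hab h.symm
        · exact hb (hT.1 h)
      simp [chi, h2]
    have e4 : ∑ T ∈ Finset.powersetCard m'' s,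
        (-1:ℤ)^(chi (insert a (insert b T)) a + chi (insert a (insert b T)) b)
        = (s.card.choose m'' : ℤ) := by
      rw [Finset.sum_congr rfl (fun T hT => ?_), Finset.sum_const,
        Finset.card_powersetCard, nsmul_eq_mul, mul_one]
      have h1 : chi (insert a (insert b T)) a = 1 := by simp [chi]
      have h2 : chi (insert a (insert b T)) b = 1 := by simp [chi]
      rw [h1, h2]; norm_num
    rw [e3, e4]
    have p1 : (s.card + 2).choose (m'' + 2)
        = s.card.choose m'' + 2 * s.card.choose (m''+1) + s.card.choose (m''+2) := by
      rw [show s.card + 2 = s.card + 1 + 1 from rfl,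
        Nat.choose_succ_succ' (s.card + 1) (m'' + 1), Nat.choose_succ_succ' s.card m'',
        Nat.choose_succ_succ' s.card (m'' + 1)]
      ring
    have hsimp : m'' + 1 + 1 - 1 = m'' + 1 := by omega
    rw [hsimp, p1]
    push_cast
    ring

lemma signature (T : Finset ℕ) : ∀ k : ℕ, 1 ≤ k →
    ∏ l ∈ Finset.Icc 1 (k-1), (-1:ℤ)^(chi T l + chi T (l+1)) = (-1:ℤ)^(chi T 1 + chi T k)
  | 1, _ => by
      simp only [Nat.sub_self]
      rw [show Finset.Icc 1 0 = ∅ by rfl, Finset.prod_empty, Even.neg_one_pow ⟨chi T 1, rfl⟩]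
  | (k+2), _ => by
      have ih := signature T (k+1) (by omega)
      simp only [Nat.add_sub_cancel] at ih
      rw [show k+2-1 = k+1 from rfl, Finset.prod_Icc_succ_top (by omega), ih,
        ← pow_add, neg_one_pow_eq_pow_mod_two,
        neg_one_pow_eq_pow_mod_two (n := chi T 1 + chi T (k+2))]
      have e : chi T (k+1+1) = chi T (k+2) := by congr 1
      rw [e]
      congr 1
      omega

/-- Let `N ≥ 2`, `2 ≤ k ≤ N` and `1 ≤ m ≤ N`.  Then
`Σ_{T ⊆ {1,…,N}, |T| = m} ∏_{l=1}^{k−1} (−1)^{χ_T(l)+χ_T(l+1)}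
  = C(N,m) − 4·Σ_{i=1}^{k−1} C(k−2, i−1)·C(N−k, m−i)` as integers, where the terms
with `i > m` are taken to be `0`. -/
theorem sum_signature_initial_segment (N k m : ℕ) (hN : 2 ≤ N) (hk2 : 2 ≤ k)
    (hkN : k ≤ N) (hm : 1 ≤ m) (hmN : m ≤ N) :
    ∑ T ∈ Finset.powersetCard m (Finset.Icc 1 N),
        ∏ l ∈ Finset.Icc 1 (k - 1), (-1 : ℤ) ^ (chi T l + chi T (l + 1)) =
      (N.choose m : ℤ) -
        4 * ∑ i ∈ Finset.Icc 1 (k - 1),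
          (if i ≤ m then ((k - 2).choose (i - 1) : ℤ) * ((N - k).choose (m - i) : ℤ)
           else 0) := by
  -- rewrite the inner product
  rw [Finset.sum_congr rfl (fun T _ => signature T k (by omega))]
  -- set up the set decomposition
  set s : Finset ℕ := ((Finset.Icc 1 N).erase 1).erase k with hs
  have hk1 : (1:ℕ) ≠ k := by omega
  have h1mem : (1:ℕ) ∈ Finset.Icc 1 N := by simp; omega
  have hkmem : k ∈ (Finset.Icc 1 N).erase 1 := by
    simp [Finset.mem_erase]; omega
  have hdecomp : Finset.Icc 1 N = insert 1 (insert k s) := by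
    rw [hs, Finset.insert_erase hkmem, Finset.insert_erase h1mem]
  have h1s : (1:ℕ) ∉ s := fun h => (Finset.mem_erase.1 (Finset.mem_of_mem_erase h)).1 rfl
  have hks : k ∉ s := fun h => (Finset.mem_erase.1 h).1 rfl
  have hcard : s.card = N - 2 := by
    rw [hs, Finset.card_erase_of_mem hkmem, Finset.card_erase_of_mem h1mem,
      Nat.card_Icc]
    omega
  rw [hdecomp, key 1 k s hk1 h1s hks m hm, hcard]
  have hNc : N - 2 + 2 = N := by omega
  rw [hNc]
  -- now the binomial sum identity
  have hvdm : ((N-2).choose (m-1) : ℤ)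
      = ∑ i ∈ Finset.Icc 1 (k - 1),
          (if i ≤ m then ((k - 2).choose (i - 1) : ℤ) * ((N - k).choose (m - i) : ℤ)
           else 0) := by
    have hsplit : N - 2 = (k - 2) + (N - k) := by omega
    rw [hsplit, Nat.add_choose_eq, Finset.Nat.sum_antidiagonal_eq_sum_range_succ_mk]
    push_cast
    rw [show (m - 1).succ = m by omega]
    -- reindex Icc 1 (k-1) as range (k-1)
    have hre : ∑ i ∈ Finset.Icc 1 (k - 1),
          (if i ≤ m then ((k - 2).choose (i - 1) : ℤ) * ((N - k).choose (m - i) : ℤ) else 0)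
        = ∑ j ∈ Finset.range (k-1),
          (if j < m then ((k - 2).choose j : ℤ) * ((N - k).choose (m - 1 - j) : ℤ) else 0) := by
      rw [← Finset.Ico_add_one_right_eq_Icc, show k - 1 + 1 = k by omega, Finset.sum_Ico_eq_sum_range]
      apply Finset.sum_congr (by congr 1)
      intro j hj
      rw [show 1+j-1 = j by omega, show m-(1+j) = m-1-j by omega]
      by_cases h : j < m
      · rw [if_pos (by omega), if_pos h]
      · rw [if_neg (by omega), if_neg h]
    rw [hre]
    -- both sides equal sum over range (min (k-1) m)
    have lhs_eq : ∑ j ∈ Finset.range m, ((k-2).choose j : ℤ) * ((N - k).choose (m - 1 - j) : ℤ)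
        = ∑ j ∈ Finset.range (min (k-1) m), ((k-2).choose j : ℤ) * ((N - k).choose (m - 1 - j) : ℤ) := by
      refine (Finset.sum_subset (by intro j hj; simp at hj ⊢; omega) ?_).symm
      intro j hj hj'
      simp only [Finset.mem_range] at hj hj'
      have : k - 2 < j := by omega
      rw [Nat.choose_eq_zero_of_lt this]
      push_cast; ring
    have rhs_eq : ∑ j ∈ Finset.range (k-1),
          (if j < m then ((k - 2).choose j : ℤ) * ((N - k).choose (m - 1 - j) : ℤ) else 0)
        = ∑ j ∈ Finset.range (min (k-1) m), ((k-2).choose j : ℤ) * ((N - k).choose (m - 1 - j) : ℤ) := by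
      rw [← Finset.sum_subset (s₁ := Finset.range (min (k-1) m))
        (by intro j hj; simp at hj ⊢; omega)
        (by intro j hj hj'; simp only [Finset.mem_range] at hj hj'
            rw [if_neg (by omega)])]
      apply Finset.sum_congr rfl
      intro j hj
      simp only [Finset.mem_range] at hj
      rw [if_pos (by omega)]
    rw [lhs_eq, rhs_eq]
  rw [hvdm]
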